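/- Under the joint multivariate normal model for (X̃, Z), the AUC_I of the linear combination Y = lᵀX̃, namely AUC_I(l) = ∫ P(lᵀX̃₁ > lᵀX̃₂ | Z₁ > t, Z₂ ≤ t) f_c(t) dt, depends on l only through the correlation ρ(l) = lᵀCov(X̃,Z)/(√(lᵀΣl)σ₂), and is a nondecreasing function of ρ(l). Therefore l_opt = Σ⁻¹Cov(X̃,Z) maximizes AUC_I(l). -/

import Mathlib

open MeasureTheory ProbabilityTheory Set Matrix

/-- The standard normal cumulative distribution function `Φ`. -/
noncomputable def stdNormalCDF (x : ℝ) : ℝ :=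
  ((gaussianReal 0 1) (Iic x)).toReal

lemma stdNormalCDF_mono : Monotone stdNormalCDF := fun x y h =>
  ENNReal.toReal_mono (measure_ne_top _ _) (measure_mono (Iic_subset_Iic.2 h))

lemma stdNormalCDF_nonneg (x : ℝ) : 0 ≤ stdNormalCDF x := ENNReal.toReal_nonneg

lemma stdNormalCDF_le_one (x : ℝ) : stdNormalCDF x ≤ 1 := by
  unfold stdNormalCDF
  rw [show (1:ℝ) = (1 : ENNReal).toReal by simp]
  exact ENNReal.toReal_mono ENNReal.one_ne_top prob_le_one

lemma key_ineq {r1 r2 : ℝ} (h1 : -1 < r1) (h12 : r1 ≤ r2) (h2 : r2 < 1) :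
    r1 * Real.sqrt (2 * (1 - r2 ^ 2)) ≤ r2 * Real.sqrt (2 * (1 - r1 ^ 2)) := by
  have hq1 : r1 ^ 2 < 1 := by nlinarith
  have hq2 : r2 ^ 2 < 1 := by nlinarith
  have hs1 : Real.sqrt (2 * (1 - r1 ^ 2)) ^ 2 = 2 * (1 - r1 ^ 2) :=
    Real.sq_sqrt (by nlinarith)
  have hs2 : Real.sqrt (2 * (1 - r2 ^ 2)) ^ 2 = 2 * (1 - r2 ^ 2) :=
    Real.sq_sqrt (by nlinarith)
  have hs1n : 0 < Real.sqrt (2 * (1 - r1 ^ 2)) := Real.sqrt_pos.mpr (by nlinarith)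
  have hs2n : 0 < Real.sqrt (2 * (1 - r2 ^ 2)) := Real.sqrt_pos.mpr (by nlinarith)
  set s1 := Real.sqrt (2 * (1 - r1 ^ 2))
  set s2 := Real.sqrt (2 * (1 - r2 ^ 2))
  rcases le_or_gt r2 0 with h | h
  · have h1' : r1 ≤ 0 := h12.trans h
    nlinarith [mul_pos hs1n hs2n, sq_nonneg (r1 * s2 - r2 * s1), sq_nonneg (r1 * s2 + r2 * s1),
      mul_nonneg (neg_nonneg.2 h) hs1n.le, mul_nonneg (neg_nonneg.2 h1') hs2n.le]
  · rcases le_or_gt r1 0 with h' | h'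
    · have : r1 * s2 ≤ 0 := mul_nonpos_of_nonpos_of_nonneg h' hs2n.le
      nlinarith [mul_pos h hs1n]
    · nlinarith [mul_pos hs1n hs2n, sq_nonneg (r1 * s2 - r2 * s1), sq_nonneg (r1 * s2 + r2 * s1),
        mul_pos h' hs2n, mul_pos h hs1n]

lemma measurableSet_band (t : ℝ) : MeasurableSet {q : ℝ × ℝ | q.1 > t ∧ q.2 ≤ t} :=
  (measurableSet_lt measurable_const measurable_fst).inter
    (measurableSet_le measurable_snd measurable_const)

lemma meas_integrand (r c : ℝ) :
    Measurable (fun q : ℝ × ℝ => stdNormalCDF (r * (q.1 - q.2) / c)) :=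
  stdNormalCDF_mono.measurable.comp (by fun_prop)

lemma integrableOn_band {ν : Measure (ℝ × ℝ)} [IsFiniteMeasure ν] (t r c : ℝ) :
    IntegrableOn (fun q : ℝ × ℝ => stdNormalCDF (r * (q.1 - q.2) / c))
      {q : ℝ × ℝ | q.1 > t ∧ q.2 ≤ t} ν := by
  apply Integrable.mono' (integrable_const 1) (meas_integrand r c).aestronglyMeasurable
  filter_upwards with q
  rw [Real.norm_eq_abs, abs_of_nonneg (stdNormalCDF_nonneg _)]
  exact stdNormalCDF_le_one _

/-- `AUC(t)` of a linear combination with correlation `r`, by formula (2) of the paper: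
`E[Φ(r(Z₁−Z₂)/(σ₂√(2(1−r²)))) | Z₁ > t, Z₂ ≤ t]` with `Z₁,Z₂` i.i.d. `N(μ₂,σ₂²)`. -/
noncomputable def aucOfRho (μ₂ σ₂ : ℝ) (t r : ℝ) : ℝ :=
  let ν := (gaussianReal μ₂ (Real.toNNReal (σ₂ ^ 2))).prod
    (gaussianReal μ₂ (Real.toNNReal (σ₂ ^ 2)))
  (∫ q in {q : ℝ × ℝ | q.1 > t ∧ q.2 ≤ t},
      stdNormalCDF (r * (q.1 - q.2) / (σ₂ * Real.sqrt (2 * (1 - r ^ 2)))) ∂ν) /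
    (ν {q : ℝ × ℝ | q.1 > t ∧ q.2 ≤ t}).toReal

lemma aucOfRho_mono (μ₂ : ℝ) {σ₂ : ℝ} (hσ : 0 < σ₂) (t : ℝ) {r1 r2 : ℝ}
    (h1 : -1 < r1) (h12 : r1 ≤ r2) (h2 : r2 < 1) :
    aucOfRho μ₂ σ₂ t r1 ≤ aucOfRho μ₂ σ₂ t r2 := by
  unfold aucOfRho
  simp only
  set ν := (gaussianReal μ₂ (Real.toNNReal (σ₂ ^ 2))).prod
    (gaussianReal μ₂ (Real.toNNReal (σ₂ ^ 2))) with hν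
  set A := {q : ℝ × ℝ | q.1 > t ∧ q.2 ≤ t} with hA
  rcases eq_or_ne ((ν A).toReal) 0 with h0 | h0
  · rw [h0, div_zero, div_zero]
  have hpos : 0 < (ν A).toReal := lt_of_le_of_ne ENNReal.toReal_nonneg (Ne.symm h0)
  rw [div_le_div_iff_of_pos_right hpos]
  apply setIntegral_mono_on (integrableOn_band t r1 _) (integrableOn_band t r2 _)
    (measurableSet_band t)
  intro q hq
  apply stdNormalCDF_mono
  have hd : 0 < q.1 - q.2 := by
    have := hq.1; have := hq.2; simp only [hA, mem_setOf_eq] at hq; linarith [hq.1, hq.2]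
  have hq1 : r1 ^ 2 < 1 := by nlinarith
  have hq2 : r2 ^ 2 < 1 := by nlinarith
  have hs1 : 0 < Real.sqrt (2 * (1 - r1 ^ 2)) := Real.sqrt_pos.mpr (by nlinarith)
  have hs2 : 0 < Real.sqrt (2 * (1 - r2 ^ 2)) := Real.sqrt_pos.mpr (by nlinarith)
  rw [div_le_div_iff₀ (by positivity) (by positivity)]
  have hk := key_ineq h1 h12 h2
  nlinarith [mul_pos hd hσ, mul_le_mul_of_nonneg_left hk (mul_pos hd hσ).le]

lemma aucOfRho_nonneg (μ₂ σ₂ t r : ℝ) : 0 ≤ aucOfRho μ₂ σ₂ t r := by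
  unfold aucOfRho
  apply div_nonneg _ ENNReal.toReal_nonneg
  exact setIntegral_nonneg (measurableSet_band t) (fun q _ => stdNormalCDF_nonneg _)

lemma aucOfRho_le_one (μ₂ σ₂ t r : ℝ) : aucOfRho μ₂ σ₂ t r ≤ 1 := by
  unfold aucOfRho
  simp only
  set ν := (gaussianReal μ₂ (Real.toNNReal (σ₂ ^ 2))).prod
    (gaussianReal μ₂ (Real.toNNReal (σ₂ ^ 2))) with hν
  set A := {q : ℝ × ℝ | q.1 > t ∧ q.2 ≤ t} with hA
  rcases eq_or_ne ((ν A).toReal) 0 with h0 | h0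
  · rw [h0, div_zero]; norm_num
  have hpos : 0 < (ν A).toReal := lt_of_le_of_ne ENNReal.toReal_nonneg (Ne.symm h0)
  rw [div_le_one hpos]
  calc (∫ q in A, stdNormalCDF (r * (q.1 - q.2) / (σ₂ * Real.sqrt (2 * (1 - r ^ 2)))) ∂ν)
      ≤ ∫ _ in A, (1:ℝ) ∂ν := by
        apply setIntegral_mono_on (integrableOn_band t r _)
          (integrableOn_const (measure_ne_top _ _)) (measurableSet_band t)
        exact fun q _ => stdNormalCDF_le_one _
    _ = (ν A).toReal := by rw [setIntegral_const]; simp; rfl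

lemma aucOfRho_measurable (μ₂ σ₂ r : ℝ) : Measurable (fun t => aucOfRho μ₂ σ₂ t r) := by
  unfold aucOfRho
  simp only
  set γ := gaussianReal μ₂ (Real.toNNReal (σ₂ ^ 2)) with hγ
  set ν := γ.prod γ with hν
  set c := σ₂ * Real.sqrt (2 * (1 - r ^ 2)) with hc
  set g : ℝ × ℝ → ℝ := fun q => stdNormalCDF (r * (q.1 - q.2) / c) with hg
  apply Measurable.div
  · -- numerator
    have hgm : Measurable g := meas_integrand r c
    have hBig : MeasurableSet {x : ℝ × (ℝ × ℝ) | x.2.1 > x.1 ∧ x.2.2 ≤ x.1} :=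
      (measurableSet_lt measurable_fst (measurable_fst.comp measurable_snd)).inter
        (measurableSet_le (measurable_snd.comp measurable_snd) measurable_fst)
    have key : StronglyMeasurable (fun x : ℝ × (ℝ × ℝ) =>
        Set.indicator {x : ℝ × (ℝ × ℝ) | x.2.1 > x.1 ∧ x.2.2 ≤ x.1} (fun x => g x.2) x) :=
      ((hgm.comp measurable_snd).indicator hBig).stronglyMeasurable
    have key2 := key.integral_prod_right' (ν := ν)
    have heq : (fun t => ∫ q in {q : ℝ × ℝ | q.1 > t ∧ q.2 ≤ t}, g q ∂ν)
        = fun t => ∫ q, Set.indicator {x : ℝ × (ℝ × ℝ) | x.2.1 > x.1 ∧ x.2.2 ≤ x.1}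
            (fun x => g x.2) (t, q) ∂ν := by
      funext t
      rw [← integral_indicator (measurableSet_band t)]
      congr 1
    rw [heq]
    exact key2.measurable
  · -- denominator
    have heq : (fun t => (ν {q : ℝ × ℝ | q.1 > t ∧ q.2 ≤ t}).toReal)
        = fun t => (γ (Ioi t)).toReal * (γ (Iic t)).toReal := by
      funext t
      have : {q : ℝ × ℝ | q.1 > t ∧ q.2 ≤ t} = Ioi t ×ˢ Iic t := rfl
      rw [this, hν, Measure.prod_prod, ENNReal.toReal_mul]
    rw [heq]
    have h1 : Antitone (fun t => (γ (Ioi t)).toReal) := fun x y h =>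
      ENNReal.toReal_mono (measure_ne_top _ _) (measure_mono (Ioi_subset_Ioi h))
    have h2 : Monotone (fun t => (γ (Iic t)).toReal) := fun x y h =>
      ENNReal.toReal_mono (measure_ne_top _ _) (measure_mono (Iic_subset_Iic.2 h))
    exact h1.measurable.mul h2.measurable

lemma integrable_auc_mul (μ₂ σ₂ r : ℝ) {f : ℝ → ℝ} (hf_nonneg : ∀ t, 0 ≤ f t)
    (hf_int : Integrable f) : Integrable (fun t => aucOfRho μ₂ σ₂ t r * f t) := by
  apply hf_int.mono' ((aucOfRho_measurable μ₂ σ₂ r).aestronglyMeasurable.mul hf_int.1)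
  filter_upwards with t
  simp only [Pi.mul_apply]
  rw [Real.norm_eq_abs, abs_mul, abs_of_nonneg (aucOfRho_nonneg μ₂ σ₂ t r),
    abs_of_nonneg (hf_nonneg t)]
  nlinarith [aucOfRho_le_one μ₂ σ₂ t r, hf_nonneg t, aucOfRho_nonneg μ₂ σ₂ t r]

lemma integral_auc_mul_mono (μ₂ : ℝ) {σ₂ : ℝ} (hσ : 0 < σ₂) {f : ℝ → ℝ}
    (hf_nonneg : ∀ t, 0 ≤ f t) (hf_int : Integrable f) {r1 r2 : ℝ}
    (h1 : -1 < r1) (h12 : r1 ≤ r2) (h2 : r2 < 1) :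
    (∫ t, aucOfRho μ₂ σ₂ t r1 * f t) ≤ ∫ t, aucOfRho μ₂ σ₂ t r2 * f t := by
  apply integral_mono (integrable_auc_mul μ₂ σ₂ r1 hf_nonneg hf_int)
    (integrable_auc_mul μ₂ σ₂ r2 hf_nonneg hf_int)
  intro t
  exact mul_le_mul_of_nonneg_right (aucOfRho_mono μ₂ hσ t h1 h12 h2) (hf_nonneg t)

/-- `ρ(l) = lᵀCov(X̃,Z)/(σ₂√(lᵀΣl))`, the correlation of `lᵀX̃` with `Z`. -/
noncomputable def rhoLin {p : ℕ} (S : Matrix (Fin p) (Fin p) ℝ) (b : Fin p → ℝ)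
    (σ₂ : ℝ) (l : Fin p → ℝ) : ℝ :=
  (l ⬝ᵥ b) / (σ₂ * Real.sqrt (l ⬝ᵥ S.mulVec l))

lemma mulVec_inv_mulVec {p : ℕ} {S : Matrix (Fin p) (Fin p) ℝ} (hS : S.PosDef)
    (b : Fin p → ℝ) : S.mulVec (S⁻¹.mulVec b) = b := by
  rw [Matrix.mulVec_mulVec, Matrix.mul_nonsing_inv _ (isUnit_iff_ne_zero.mpr hS.det_pos.ne'),
    Matrix.one_mulVec]

lemma dot_symm {p : ℕ} {S : Matrix (Fin p) (Fin p) ℝ} (hS : S.PosDef)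
    (u v : Fin p → ℝ) : u ⬝ᵥ S.mulVec v = v ⬝ᵥ S.mulVec u := by
  have hT : Sᵀ = S := by
    have := hS.1
    rwa [Matrix.IsHermitian, Matrix.conjTranspose_eq_transpose_of_trivial] at this
  rw [Matrix.dotProduct_mulVec u S v, ← Matrix.mulVec_transpose, hT, dotProduct_comm]

lemma posdef_dot_pos {p : ℕ} {S : Matrix (Fin p) (Fin p) ℝ} (hS : S.PosDef)
    {x : Fin p → ℝ} (hx : x ≠ 0) : 0 < x ⬝ᵥ S.mulVec x := by
  have := hS.dotProduct_mulVec_pos hx; simpa using this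

lemma posdef_dot_nonneg {p : ℕ} {S : Matrix (Fin p) (Fin p) ℝ} (hS : S.PosDef)
    (x : Fin p → ℝ) : 0 ≤ x ⬝ᵥ S.mulVec x := by
  have := hS.posSemidef.dotProduct_mulVec_nonneg x; simpa using this

lemma cauchy_like {p : ℕ} {S : Matrix (Fin p) (Fin p) ℝ} (hS : S.PosDef)
    (b l : Fin p → ℝ) :
    (l ⬝ᵥ b) ^ 2 ≤ (l ⬝ᵥ S.mulVec l) * (b ⬝ᵥ S⁻¹.mulVec b) := by
  set w := S⁻¹.mulVec b with hw
  have hSw : S.mulVec w = b := mulVec_inv_mulVec hS b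
  set A := l ⬝ᵥ S.mulVec l with hA
  set B := l ⬝ᵥ b with hB
  have hC : b ⬝ᵥ S⁻¹.mulVec b = w ⬝ᵥ S.mulVec w := by
    rw [hSw, dotProduct_comm, ← hw]
  set C := w ⬝ᵥ S.mulVec w with hCdef
  rw [hC]
  rcases eq_or_ne l 0 with rfl | hl
  · have : B = 0 := by simp [hB]
    have hA0 : A = 0 := by simp [hA]
    rw [this, hA0]; simp
  have hApos : 0 < A := posdef_dot_pos hS hl
  have key : 0 ≤ (A • w - B • l) ⬝ᵥ S.mulVec (A • w - B • l) :=
    posdef_dot_nonneg hS _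
  have expand : (A • w - B • l) ⬝ᵥ S.mulVec (A • w - B • l) = A * (A * C - B ^ 2) := by
    rw [Matrix.mulVec_sub, Matrix.mulVec_smul, Matrix.mulVec_smul]
    rw [sub_dotProduct, smul_dotProduct, smul_dotProduct, dotProduct_sub, dotProduct_sub,
      dotProduct_smul, dotProduct_smul, dotProduct_smul, dotProduct_smul]
    have h1 : w ⬝ᵥ S.mulVec l = B := by rw [dot_symm hS, hSw]
    have h2 : w ⬝ᵥ S.mulVec w = C := rfl
    have h3 : l ⬝ᵥ S.mulVec w = B := by rw [hSw]
    have h4 : l ⬝ᵥ S.mulVec l = A := rfl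
    rw [h1, h2, h3, h4]
    simp only [smul_eq_mul]
    ring
  rw [expand] at key
  nlinarith [key, hApos]

lemma rhoLin_neg {p : ℕ} (S : Matrix (Fin p) (Fin p) ℝ) (b : Fin p → ℝ) (σ₂ : ℝ)
    (l : Fin p → ℝ) : rhoLin S b σ₂ (-l) = - rhoLin S b σ₂ l := by
  unfold rhoLin
  rw [neg_dotProduct, Matrix.mulVec_neg, dotProduct_neg, neg_dotProduct, neg_neg, neg_div]

lemma rhoLin_opt_eq {p : ℕ} {S : Matrix (Fin p) (Fin p) ℝ} (hS : S.PosDef)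
    {b : Fin p → ℝ} (hb : b ≠ 0) (σ₂ : ℝ) :
    rhoLin S b σ₂ (S⁻¹.mulVec b) = Real.sqrt (b ⬝ᵥ S⁻¹.mulVec b) / σ₂ := by
  set w := S⁻¹.mulVec b with hw
  have hSw : S.mulVec w = b := mulVec_inv_mulVec hS b
  have hC : 0 < b ⬝ᵥ w := posdef_dot_pos hS.inv hb
  unfold rhoLin
  have h1 : w ⬝ᵥ b = b ⬝ᵥ w := dotProduct_comm _ _
  have h2 : w ⬝ᵥ S.mulVec w = b ⬝ᵥ w := by rw [hSw]; exact dotProduct_comm _ _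
  rw [h1, h2]
  set C := b ⬝ᵥ w with hCdef
  have hsC : 0 < Real.sqrt C := Real.sqrt_pos.mpr hC
  rcases eq_or_ne σ₂ 0 with rfl | hσ
  · simp
  rw [div_eq_div_iff (by positivity) hσ]
  linear_combination (-σ₂) * Real.sq_sqrt hC.le

lemma rho_le_opt {p : ℕ} {S : Matrix (Fin p) (Fin p) ℝ} (hS : S.PosDef)
    {b : Fin p → ℝ} (hb : b ≠ 0) {σ₂ : ℝ} (hσ : 0 < σ₂) {l : Fin p → ℝ} (hl : l ≠ 0) :
    rhoLin S b σ₂ l ≤ rhoLin S b σ₂ (S⁻¹.mulVec b) := by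
  rw [rhoLin_opt_eq hS hb]
  unfold rhoLin
  set A := l ⬝ᵥ S.mulVec l with hA
  set B := l ⬝ᵥ b with hB
  set C := b ⬝ᵥ S⁻¹.mulVec b with hC
  have hApos : 0 < A := posdef_dot_pos hS hl
  have hCpos : 0 < C := posdef_dot_pos hS.inv hb
  have hcs : B ^ 2 ≤ A * C := cauchy_like hS b l
  have hsA : 0 < Real.sqrt A := Real.sqrt_pos.mpr hApos
  rw [div_le_div_iff₀ (by positivity) hσ]
  have hBle : B ≤ Real.sqrt A * Real.sqrt C := by
    calc B ≤ |B| := le_abs_self B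
      _ = Real.sqrt (B ^ 2) := (Real.sqrt_sq_eq_abs B).symm
      _ ≤ Real.sqrt (A * C) := Real.sqrt_le_sqrt hcs
      _ = Real.sqrt A * Real.sqrt C := Real.sqrt_mul hApos.le C
  nlinarith [mul_le_mul_of_nonneg_right hBle hσ.le]

/-- `AUC_I(l) = ∫ AUC(t, ρ(l)) f_c(t) dt` for the linear combination `Y = lᵀX̃` under
the joint multivariate normal model. -/
noncomputable def aucILin {p : ℕ} (S : Matrix (Fin p) (Fin p) ℝ) (b : Fin p → ℝ)
    (μ₂ σ₂ : ℝ) (f : ℝ → ℝ) (l : Fin p → ℝ) : ℝ :=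
  ∫ t, aucOfRho μ₂ σ₂ t (rhoLin S b σ₂ l) * f t

/-- Under the joint multivariate normal model, `AUC_I(l)` depends on `l` only through
`ρ(l)` and is nondecreasing in `ρ(l)`; therefore `l_opt = Σ⁻¹Cov(X̃,Z)` maximizes
`AUC_I(l)` over nonzero `l`. -/
theorem aucILin_maximized_at_optimal {p : ℕ}
    (S : Matrix (Fin p) (Fin p) ℝ) (hS : S.PosDef) (b : Fin p → ℝ) (hb : b ≠ 0)
    (μ₂ σ₂ : ℝ) (hσ₂ : 0 < σ₂) (hsub : b ⬝ᵥ S⁻¹.mulVec b < σ₂ ^ 2)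
    (f : ℝ → ℝ) (hf_nonneg : ∀ t, 0 ≤ f t) (hf_int : Integrable f)
    (hf_one : ∫ t, f t = 1) :
    (∀ l₁ l₂ : Fin p → ℝ, l₁ ≠ 0 → l₂ ≠ 0 →
      rhoLin S b σ₂ l₁ = rhoLin S b σ₂ l₂ →
        aucILin S b μ₂ σ₂ f l₁ = aucILin S b μ₂ σ₂ f l₂) ∧
    (∀ l₁ l₂ : Fin p → ℝ, l₁ ≠ 0 → l₂ ≠ 0 →
      rhoLin S b σ₂ l₁ ≤ rhoLin S b σ₂ l₂ →
        aucILin S b μ₂ σ₂ f l₁ ≤ aucILin S b μ₂ σ₂ f l₂) ∧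
    ∀ l : Fin p → ℝ, l ≠ 0 →
      aucILin S b μ₂ σ₂ f l ≤ aucILin S b μ₂ σ₂ f (S⁻¹.mulVec b) := by
  have hwne : S⁻¹.mulVec b ≠ 0 := by
    intro h
    apply hb
    have h2 := mulVec_inv_mulVec hS b
    rw [h, Matrix.mulVec_zero] at h2
    exact h2.symm
  have hopt_lt : rhoLin S b σ₂ (S⁻¹.mulVec b) < 1 := by
    rw [rhoLin_opt_eq hS hb, div_lt_one hσ₂]
    calc Real.sqrt (b ⬝ᵥ S⁻¹.mulVec b) < Real.sqrt (σ₂ ^ 2) :=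
          Real.sqrt_lt_sqrt (posdef_dot_pos hS.inv hb).le hsub
      _ = σ₂ := Real.sqrt_sq hσ₂.le
  have hkey : ∀ l : Fin p → ℝ, l ≠ 0 →
      -1 < rhoLin S b σ₂ l ∧ rhoLin S b σ₂ l ≤ rhoLin S b σ₂ (S⁻¹.mulVec b) := by
    intro l hl
    refine ⟨?_, rho_le_opt hS hb hσ₂ hl⟩
    have h1 := rho_le_opt hS hb hσ₂ (neg_ne_zero.2 hl)
    rw [rhoLin_neg] at h1
    linarith
  refine ⟨?_, ?_, ?_⟩
  · intro l1 l2 _ _ h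
    unfold aucILin
    rw [h]
  · intro l1 l2 h1 h2 hle
    exact integral_auc_mul_mono μ₂ hσ₂ hf_nonneg hf_int (hkey l1 h1).1 hle
      (lt_of_le_of_lt (hkey l2 h2).2 hopt_lt)
  · intro l hl
    exact integral_auc_mul_mono μ₂ hσ₂ hf_nonneg hf_int (hkey l hl).1 (hkey l hl).2 hopt_lt
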